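/- In any non-attacking filling of π(μ) = (μ_n+1, μ_1, …, μ_{n−1}), the box (1,1) must be filled with the value 1; consequently σ ↦ ^πσ is a bijection from non-attacking fillings of μ to non-attacking fillings of π(μ). -/
import Mathlib


open Finset

noncomputable section
attribute [local instance] Classical.propDecidable

/-- `u` lies in the column diagram of the composition `μ` (columns `1,…,n`). -/
def dgIn (n : ℕ) (μ : ℕ → ℕ) (u : ℕ × ℕ) : Prop :=
  1 ≤ u.1 ∧ u.1 ≤ n ∧ 1 ≤ u.2 ∧ u.2 ≤ μ u.1

/-- `u` lies in the augmented diagram of `μ` (row `0` added). -/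
def augIn (n : ℕ) (μ : ℕ → ℕ) (u : ℕ × ℕ) : Prop :=
  1 ≤ u.1 ∧ u.1 ≤ n ∧ u.2 ≤ μ u.1

/-- The column diagram of `μ` as a finite set. -/
def dgF (n : ℕ) (μ : ℕ → ℕ) : Finset (ℕ × ℕ) :=
  (Finset.Icc 1 n).biUnion (fun i => (Finset.Icc 1 (μ i)).image (fun j => (i, j)))

/-- The augmented diagram of `μ` as a finite set. -/
def augF (n : ℕ) (μ : ℕ → ℕ) : Finset (ℕ × ℕ) :=
  (Finset.Icc 1 n).biUnion (fun i => (Finset.Icc 0 (μ i)).image (fun j => (i, j)))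

/-- The box directly below `u`. -/
def dbox (u : ℕ × ℕ) : ℕ × ℕ := (u.1, u.2 - 1)

/-- `v` belongs to the arm of `u` (left arm or right arm). -/
def armIn (n : ℕ) (μ : ℕ → ℕ) (u v : ℕ × ℕ) : Prop :=
  (dgIn n μ v ∧ v.2 = u.2 ∧ v.1 < u.1 ∧ μ v.1 ≤ μ u.1) ∨
  (augIn n μ v ∧ v.2 + 1 = u.2 ∧ u.1 < v.1 ∧ μ v.1 < μ u.1)

/-- The arm of `u` as a finite set. -/
def armF (n : ℕ) (μ : ℕ → ℕ) (u : ℕ × ℕ) : Finset (ℕ × ℕ) :=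
  (augF n μ).filter (fun v => armIn n μ u v)

/-- The leg length `l(u) = μ_i - j`. -/
def legLen (μ : ℕ → ℕ) (u : ℕ × ℕ) : ℕ := μ u.1 - u.2

/-- The arm length `a(u) = |arm(u)|`. -/
def armLen (n : ℕ) (μ : ℕ → ℕ) (u : ℕ × ℕ) : ℕ := (armF n μ u).card

/-- Two distinct boxes attack each other: same row, or consecutive rows with
the lower box strictly to the right. -/
def attacks (u v : ℕ × ℕ) : Prop :=
  u ≠ v ∧ (u.2 = v.2 ∨ (u.2 = v.2 + 1 ∧ u.1 < v.1) ∨ (v.2 = u.2 + 1 ∧ v.1 < u.1))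

/-- Reading order: rows top to bottom, right to left within a row. -/
def rlt (u v : ℕ × ℕ) : Prop := v.2 < u.2 ∨ (u.2 = v.2 ∧ v.1 < u.1)

/-- The augmented filling: value `i` in the row-0 box `(i,0)`. -/
def augOf (σ : ℕ × ℕ → ℕ) : ℕ × ℕ → ℕ := fun u => if u.2 = 0 then u.1 else σ u

/-- The (augmented) filling is non-attacking. -/
def NonAttacking (n : ℕ) (μ : ℕ → ℕ) (σh : ℕ × ℕ → ℕ) : Prop :=
  ∀ u v : ℕ × ℕ, augIn n μ u → augIn n μ v → attacks u v → σh u ≠ σh v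

/-- The set of inversions of an augmented filling: attacking pairs,
earlier box (in reading order) having the larger entry. -/
def invF (n : ℕ) (μ : ℕ → ℕ) (σh : ℕ × ℕ → ℕ) : Finset ((ℕ × ℕ) × (ℕ × ℕ)) :=
  ((augF n μ) ×ˢ (augF n μ)).filter
    (fun p => attacks p.1 p.2 ∧ rlt p.1 p.2 ∧ σh p.2 < σh p.1)

/-- The descent set of an augmented filling. -/
def desF (n : ℕ) (μ : ℕ → ℕ) (σh : ℕ × ℕ → ℕ) : Finset (ℕ × ℕ) :=
  (dgF n μ).filter (fun u => σh (dbox u) < σh u)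

/-- maj = sum of `l(u)+1` over descents. -/
def majStat (n : ℕ) (μ : ℕ → ℕ) (σh : ℕ × ℕ → ℕ) : ℕ :=
  ∑ u ∈ desF n μ σh, (legLen μ u + 1)

/-- `χ_{xy} = 1` iff the earlier box in reading order carries the larger entry. -/
def chi (σh : ℕ × ℕ → ℕ) (x y : ℕ × ℕ) : ℕ :=
  if (rlt x y ∧ σh y < σh x) ∨ (rlt y x ∧ σh x < σh y) then 1 else 0

/-- Triples `(u, v, d(u))`, encoded by the pair `(u, v)` with `v ∈ arm(u)`. -/
def triplesF (n : ℕ) (μ : ℕ → ℕ) : Finset ((ℕ × ℕ) × (ℕ × ℕ)) :=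
  ((dgF n μ) ×ˢ (augF n μ)).filter (fun p => armIn n μ p.1 p.2)

/-- Inversion triples: `χ_{uv} + χ_{vw} - χ_{uw} = 1` where `w = d(u)`. -/
def invTriplesF (n : ℕ) (μ : ℕ → ℕ) (σh : ℕ × ℕ → ℕ) : Finset ((ℕ × ℕ) × (ℕ × ℕ)) :=
  (triplesF n μ).filter
    (fun p => chi σh p.1 p.2 + chi σh p.2 (dbox p.1) = chi σh p.1 (dbox p.1) + 1)

/-- Co-inversion triples: `χ_{uv} + χ_{vw} - χ_{uw} = 0` where `w = d(u)`. -/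
def coinvTriplesF (n : ℕ) (μ : ℕ → ℕ) (σh : ℕ × ℕ → ℕ) : Finset ((ℕ × ℕ) × (ℕ × ℕ)) :=
  (triplesF n μ).filter
    (fun p => chi σh p.1 p.2 + chi σh p.2 (dbox p.1) = chi σh p.1 (dbox p.1))

/-- coinv = number of co-inversion triples. -/
def coinvStat (n : ℕ) (μ : ℕ → ℕ) (σh : ℕ × ℕ → ℕ) : ℕ := (coinvTriplesF n μ σh).card

/-- `σ` is a filling of `μ`, i.e. takes values in `[n]` on the diagram. -/
def IsFilling (n : ℕ) (μ : ℕ → ℕ) (σ : ℕ × ℕ → ℕ) : Prop :=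
  ∀ u : ℕ × ℕ, dgIn n μ u → 1 ≤ σ u ∧ σ u ≤ n

/-- `π` on compositions: `π(μ) = (μ_n+1, μ_1, …, μ_{n-1})`. -/
def piComp (n : ℕ) (μ : ℕ → ℕ) : ℕ → ℕ := fun i => if i = 1 then μ n + 1 else μ (i - 1)

/-- `π` on boxes: `(i,j) ↦ (i+1,j)` for `i < n`, `(n,j) ↦ (1,j+1)`. -/
def piBox (n : ℕ) (u : ℕ × ℕ) : ℕ × ℕ := if u.1 < n then (u.1 + 1, u.2) else (1, u.2 + 1)

/-- `π` on values: `k ↦ k+1` for `k < n`, `n ↦ 1`. -/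
def piVal (n k : ℕ) : ℕ := if k < n then k + 1 else 1

/-- Inverse of `π` on boxes. -/
def piBoxInv (n : ℕ) (v : ℕ × ℕ) : ℕ × ℕ :=
  if v.1 = 1 then (n, v.2 - 1) else (v.1 - 1, v.2)

/-- The map `σ ↦ ^πσ` on (canonically extended) fillings. -/
def piFillC (n : ℕ) (μ : ℕ → ℕ) (σ : ℕ × ℕ → ℕ) : ℕ × ℕ → ℕ :=
  fun v => if dgIn n (piComp n μ) v then piVal n (augOf σ (piBoxInv n v)) else 0

/-- The set of non-attacking fillings of `ν` (normalized to vanish off the diagram). -/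
def NAFillings (n : ℕ) (ν : ℕ → ℕ) : Set (ℕ × ℕ → ℕ) :=
  {σ | IsFilling n ν σ ∧ (∀ u : ℕ × ℕ, ¬ dgIn n ν u → σ u = 0) ∧
       NonAttacking n ν (augOf σ)}

/-- Inverse of `piVal`. -/
def pVI (n k : ℕ) : ℕ := if k = 1 then n else k - 1

lemma piVal_mem {n k : ℕ} (hn : 1 ≤ n) (h : 1 ≤ k ∧ k ≤ n) :
    1 ≤ piVal n k ∧ piVal n k ≤ n := by unfold piVal; split_ifs <;> omega

lemma pVI_mem {n k : ℕ} (hn : 1 ≤ n) (h : 1 ≤ k ∧ k ≤ n) :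
    1 ≤ pVI n k ∧ pVI n k ≤ n := by unfold pVI; split_ifs <;> omega

lemma piVal_inj {n a b : ℕ} (ha : 1 ≤ a ∧ a ≤ n) (hb : 1 ≤ b ∧ b ≤ n)
    (h : piVal n a = piVal n b) : a = b := by unfold piVal at h; split_ifs at h <;> omega

lemma pVI_inj {n a b : ℕ} (ha : 1 ≤ a ∧ a ≤ n) (hb : 1 ≤ b ∧ b ≤ n)
    (h : pVI n a = pVI n b) : a = b := by unfold pVI at h; split_ifs at h <;> omega

lemma piVal_pVI {n k : ℕ} (h : 1 ≤ k ∧ k ≤ n) : piVal n (pVI n k) = k := by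
  unfold piVal pVI; split_ifs <;> omega

lemma dg_aug {n : ℕ} {μ : ℕ → ℕ} {u : ℕ × ℕ} (h : dgIn n μ u) : augIn n μ u :=
  ⟨h.1, h.2.1, h.2.2.2⟩

lemma augOf_mem {n : ℕ} {μ : ℕ → ℕ} {σ : ℕ × ℕ → ℕ} (hf : IsFilling n μ σ)
    {u : ℕ × ℕ} (hu : augIn n μ u) : 1 ≤ augOf σ u ∧ augOf σ u ≤ n := by
  unfold augOf; split_ifs with h
  · exact ⟨hu.1, hu.2.1⟩
  · exact hf u ⟨hu.1, hu.2.1, by omega, hu.2.2⟩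

lemma pinv_aug {n : ℕ} {μ : ℕ → ℕ} (hn : 1 ≤ n) {v : ℕ × ℕ}
    (hv : augIn n (piComp n μ) v) : augIn n μ (piBoxInv n v) := by
  obtain ⟨a, b⟩ := v
  obtain ⟨h1, h2, h3⟩ := hv
  simp only [piComp] at h3
  unfold piBoxInv augIn
  dsimp only at *
  split_ifs at h3 ⊢ with h <;> simp_all <;> omega

lemma piComp_succ {n : ℕ} {μ : ℕ → ℕ} {a : ℕ} (ha : 1 ≤ a) :
    piComp n μ (a + 1) = μ a := by
  simp only [piComp]; rw [if_neg (by omega)]; congr 1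

lemma piComp_one {n : ℕ} {μ : ℕ → ℕ} : piComp n μ 1 = μ n + 1 := by
  simp [piComp]

lemma pbox_aug {n : ℕ} {μ : ℕ → ℕ} (hn : 1 ≤ n) {u : ℕ × ℕ}
    (hu : augIn n μ u) : augIn n (piComp n μ) (piBox n u) := by
  obtain ⟨a, b⟩ := u
  obtain ⟨h1, h2, h3⟩ := hu
  dsimp only at h1 h2 h3
  by_cases h : a < n
  · have e : piBox n (a, b) = (a + 1, b) := by simp [piBox, h]
    rw [e]
    refine ⟨by omega, by omega, ?_⟩
    show b ≤ piComp n μ (a + 1)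
    rw [piComp_succ h1]; exact h3
  · have ha : a = n := by omega
    subst ha
    have e : piBox a (a, b) = (1, b + 1) := by simp [piBox, h]
    rw [e]
    refine ⟨le_refl 1, hn, ?_⟩
    show b + 1 ≤ piComp a μ 1
    rw [piComp_one]
    omega

lemma pbox_dg {n : ℕ} {μ : ℕ → ℕ} (hn : 1 ≤ n) {u : ℕ × ℕ}
    (hu : dgIn n μ u) : dgIn n (piComp n μ) (piBox n u) := by
  obtain ⟨a, b⟩ := u
  obtain ⟨h1, h2, h3, h4⟩ := hu
  dsimp only at h1 h2 h3 h4
  by_cases h : a < n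
  · have e : piBox n (a, b) = (a + 1, b) := by simp [piBox, h]
    rw [e]
    refine ⟨by omega, by omega, h3, ?_⟩
    show b ≤ piComp n μ (a + 1)
    rw [piComp_succ h1]; exact h4
  · have ha : a = n := by omega
    subst ha
    have e : piBox a (a, b) = (1, b + 1) := by simp [piBox, h]
    rw [e]
    refine ⟨le_refl 1, hn, by omega, ?_⟩
    show b + 1 ≤ piComp a μ 1
    rw [piComp_one]
    omega

lemma pbox_pinv {n : ℕ} {μ : ℕ → ℕ} {v : ℕ × ℕ}
    (hv : dgIn n (piComp n μ) v) : piBox n (piBoxInv n v) = v := by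
  obtain ⟨a, b⟩ := v
  obtain ⟨h1, h2, h3, h4⟩ := hv
  unfold piBox piBoxInv
  dsimp only at *
  split_ifs <;> simp_all [Prod.ext_iff] <;> omega

lemma pinv_pbox {n : ℕ} {u : ℕ × ℕ} (h1 : 1 ≤ u.1) (h2 : u.1 ≤ n) :
    piBoxInv n (piBox n u) = u := by
  obtain ⟨a, b⟩ := u
  unfold piBox piBoxInv
  dsimp only at *
  split_ifs <;> simp_all [Prod.ext_iff] <;> omega

lemma pbox_attacks {n : ℕ} {μ : ℕ → ℕ} (hn : 1 ≤ n) {u v : ℕ × ℕ}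
    (hu : augIn n μ u) (hv : augIn n μ v) (h : attacks u v) :
    attacks (piBox n u) (piBox n v) := by
  obtain ⟨a, b⟩ := u
  obtain ⟨c, d⟩ := v
  obtain ⟨hu1, hu2, hu3⟩ := hu
  obtain ⟨hv1, hv2, hv3⟩ := hv
  simp only [attacks, Prod.mk.injEq, not_and, ne_eq] at h
  unfold piBox
  dsimp only at *
  split_ifs <;> simp_all [attacks, Prod.ext_iff] <;> omega

lemma pinv_attacks {n : ℕ} {μ : ℕ → ℕ} (hn : 1 ≤ n) {u v : ℕ × ℕ}
    (hu : augIn n (piComp n μ) u) (hv : augIn n (piComp n μ) v) (h : attacks u v) :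
    attacks (piBoxInv n u) (piBoxInv n v) := by
  obtain ⟨a, b⟩ := u
  obtain ⟨c, d⟩ := v
  obtain ⟨hu1, hu2, hu3⟩ := hu
  obtain ⟨hv1, hv2, hv3⟩ := hv
  simp only [attacks, Prod.mk.injEq, not_and, ne_eq] at h
  unfold piBoxInv
  dsimp only at *
  split_ifs <;> simp_all [attacks, Prod.ext_iff] <;> omega

lemma augOf_piFillC {n : ℕ} {μ : ℕ → ℕ} (hn : 1 ≤ n) (σ : ℕ × ℕ → ℕ) {v : ℕ × ℕ}
    (hv : augIn n (piComp n μ) v) :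
    augOf (piFillC n μ σ) v = piVal n (augOf σ (piBoxInv n v)) := by
  by_cases hb : v.2 = 0
  · obtain ⟨a, b⟩ := v
    dsimp only at hb
    subst hb
    obtain ⟨h1, h2, h3⟩ := hv
    dsimp only at h1 h2
    unfold augOf piBoxInv piVal
    by_cases ha : a = 1 <;> simp [ha] <;> split_ifs <;> omega
  · have hdg : dgIn n (piComp n μ) v := ⟨hv.1, hv.2.1, by omega, hv.2.2⟩
    simp [augOf, hb, piFillC, hdg]

lemma part1 {n : ℕ} {μ : ℕ → ℕ} (hn : 1 ≤ n) (τ : ℕ × ℕ → ℕ)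
    (hτ : τ ∈ NAFillings n (piComp n μ)) : τ (1, 1) = 1 := by
  obtain ⟨hf, -, hna⟩ := hτ
  have h11 : dgIn n (piComp n μ) (1, 1) := by
    refine ⟨le_refl 1, hn, le_refl 1, ?_⟩
    simp [piComp]
  have hr := hf _ h11
  by_contra hne
  set i := τ (1, 1) with hi
  have hi2 : 2 ≤ i := by omega
  have hin : i ≤ n := hr.2
  have hatt : attacks (1, 1) (i, 0) := by
    refine ⟨?_, Or.inr (Or.inl ⟨rfl, by omega⟩)⟩
    intro hc
    have := congrArg Prod.snd hc
    simp at this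
  have hne2 := hna (1, 1) (i, 0) (dg_aug h11) ⟨by omega, hin, by omega⟩ hatt
  have e1 : augOf τ (1, 1) = i := by
    have : augOf τ (1, 1) = τ (1, 1) := by simp [augOf]
    rw [this, ← hi]
  have e2 : augOf τ (i, 0) = i := by simp [augOf]
  rw [e1, e2] at hne2
  exact hne2 rfl

lemma mapsTo_piFillC {n : ℕ} {μ : ℕ → ℕ} (hn : 1 ≤ n) {σ : ℕ × ℕ → ℕ}
    (hσ : σ ∈ NAFillings n μ) : piFillC n μ σ ∈ NAFillings n (piComp n μ) := by
  obtain ⟨hf, hz, hna⟩ := hσ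
  refine ⟨?_, ?_, ?_⟩
  · intro v hv
    have : piFillC n μ σ v = piVal n (augOf σ (piBoxInv n v)) := by simp [piFillC, hv]
    rw [this]
    exact piVal_mem hn (augOf_mem hf (pinv_aug hn (dg_aug hv)))
  · intro v hv; simp [piFillC, hv]
  · intro u v hu hv hatt
    rw [augOf_piFillC hn σ hu, augOf_piFillC hn σ hv]
    intro heq
    exact hna _ _ (pinv_aug hn hu) (pinv_aug hn hv) (pinv_attacks hn hu hv hatt)
      (piVal_inj (augOf_mem hf (pinv_aug hn hu)) (augOf_mem hf (pinv_aug hn hv)) heq)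

/-- in any non-attacking filling of `π(μ)` the box `(1,1)` carries
the value `1`; consequently `σ ↦ ^πσ` is a bijection from non-attacking fillings
of `μ` onto those of `π(μ)`. -/
theorem pi_fill_bijection (n : ℕ) (μ : ℕ → ℕ) (hn : 1 ≤ n) :
    (∀ τ ∈ NAFillings n (piComp n μ), τ (1, 1) = 1) ∧
    Set.BijOn (piFillC n μ) (NAFillings n μ) (NAFillings n (piComp n μ)) := by
  refine ⟨fun τ hτ => part1 hn τ hτ, ?_, ?_, ?_⟩
  · exact fun σ hσ => mapsTo_piFillC hn hσ
  · -- injectivity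
    intro σ1 h1 σ2 h2 heq
    funext u
    by_cases hu : dgIn n μ u
    · have hb := pbox_dg hn hu
      have key : ∀ σ : ℕ × ℕ → ℕ, piFillC n μ σ (piBox n u) = piVal n (σ u) := by
        intro σ
        have h2' : piBoxInv n (piBox n u) = u := pinv_pbox hu.1 hu.2.1
        have : augOf σ u = σ u := by
          unfold augOf; have := hu.2.2.1; split_ifs with h <;> simp_all <;> omega
        simp [piFillC, hb, h2', this]
      have e : piVal n (σ1 u) = piVal n (σ2 u) := by
        rw [← key σ1, ← key σ2, heq]
      exact piVal_inj (h1.1 u hu) (h2.1 u hu) e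
    · rw [h1.2.1 u hu, h2.2.1 u hu]
  · -- surjectivity
    intro τ hτ
    have h11 : τ (1, 1) = 1 := part1 hn τ hτ
    obtain ⟨hfτ, hzτ, hnaτ⟩ := hτ
    set σ : ℕ × ℕ → ℕ :=
      fun u => if dgIn n μ u then pVI n (augOf τ (piBox n u)) else 0 with hσdef
    have claimA : ∀ u : ℕ × ℕ, augIn n μ u →
        augOf σ u = pVI n (augOf τ (piBox n u)) := by
      intro u hu
      by_cases hb : u.2 = 0
      · obtain ⟨a, b⟩ := u
        dsimp only at hb; subst hb
        obtain ⟨h1, h2, -⟩ := hu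
        dsimp only at h1 h2
        by_cases ha : a < n
        · have e1 : piBox n (a, 0) = (a + 1, 0) := by simp [piBox, ha]
          have e2 : augOf τ (a + 1, 0) = a + 1 := by simp [augOf]
          have e3 : augOf σ (a, 0) = a := by simp [augOf]
          rw [e1, e2, e3]
          unfold pVI
          rw [if_neg (by omega)]
          omega
        · have han : a = n := by omega
          have e1 : piBox n (a, 0) = (1, 1) := by simp [piBox, ha]
          have e2 : augOf τ (1, 1) = 1 := by
            rw [show augOf τ (1, 1) = τ (1, 1) by simp [augOf]]; exact h11
          have e3 : augOf σ (a, 0) = a := by simp [augOf]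
          rw [e1, e2, e3]
          rw [show pVI n 1 = n by simp [pVI]]
          exact han
      · have hdg : dgIn n μ u := ⟨hu.1, hu.2.1, by omega, hu.2.2⟩
        simp [augOf, hb, hσdef, hdg]
    have hτval : ∀ u : ℕ × ℕ, augIn n μ u →
        1 ≤ augOf τ (piBox n u) ∧ augOf τ (piBox n u) ≤ n :=
      fun u hu => augOf_mem hfτ (pbox_aug hn hu)
    have hσmem : σ ∈ NAFillings n μ := by
      refine ⟨?_, ?_, ?_⟩
      · intro u hu
        simp only [hσdef, if_pos hu]
        exact pVI_mem hn (hτval u (dg_aug hu))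
      · intro u hu; simp [hσdef, hu]
      · intro u v hu hv hatt
        rw [claimA u hu, claimA v hv]
        intro heq
        exact hnaτ _ _ (pbox_aug hn hu) (pbox_aug hn hv) (pbox_attacks hn hu hv hatt)
          (pVI_inj (hτval u hu) (hτval v hv) heq)
    refine ⟨σ, hσmem, ?_⟩
    funext v
    by_cases hv : dgIn n (piComp n μ) v
    · have e1 : piFillC n μ σ v = piVal n (augOf σ (piBoxInv n v)) := by
        simp [piFillC, hv]
      rw [e1, claimA _ (pinv_aug hn (dg_aug hv)), pbox_pinv hv]
      have hτv : augOf τ v = τ v := by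
        unfold augOf; have := hv.2.2.1; split_ifs with h <;> simp_all <;> omega
      have hm := augOf_mem hfτ (dg_aug hv)
      rw [hτv] at hm
      rw [hτv, piVal_pVI hm]
    · simp [piFillC, hv, hzτ v hv]
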